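/- arXiv:2005.08577 — 5 statements merged into one kernel-verified Lean document; each statement's English description precedes it below -/
import Mathlib

section
/- Let α, β be real numbers with α² + β² = 1 and αβ ≠ 0, let K = √(1 + 4α²β²), and set B₀ = (σz + 2αβ·σx)/K and B₁ = (σz − 2αβ·σx)/K. Then B₀ and B₁ are Hermitian with B₀² = B₁² = I, and for ψ = α·(e₀ ⊗ e₀) + β·(e₁ ⊗ e₁) one has ⟨ψ, (σz ⊗ B₀ + σz ⊗ B₁ + σx ⊗ B₀ − σx ⊗ B₁) ψ⟩ = 2√(1 + 4α²β²). -/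
open Matrix Kronecker

/-- Pauli matrix σz. -/
noncomputable def sigmaZ : Matrix (Fin 2) (Fin 2) ℂ := !![1, 0; 0, -1]

/-- Pauli matrix σx. -/
noncomputable def sigmaX : Matrix (Fin 2) (Fin 2) ℂ := !![0, 1; 1, 0]

/-- Standard basis vector |0⟩ of ℂ². -/
noncomputable def e0 : Fin 2 → ℂ := ![1, 0]

/-- Standard basis vector |1⟩ of ℂ². -/
noncomputable def e1 : Fin 2 → ℂ := ![0, 1]

/-- Tensor (Kronecker) product of two qubit vectors. -/
noncomputable def tens (u v : Fin 2 → ℂ) : Fin 2 × Fin 2 → ℂ := fun p => u p.1 * v p.2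

set_option maxHeartbeats 2000000 in
/-- Gisin's computation: with K = √(1 + 4α²β²), B₀ = (σz + 2αβ·σx)/K and
B₁ = (σz − 2αβ·σx)/K are ±1-valued observables (Hermitian with square the identity),
and the state ψ = α|00⟩ + β|11⟩ attains the CHSH value 2√(1 + 4α²β²). -/
theorem gisin_chsh_value (α β : ℝ) (hαβ : α ^ 2 + β ^ 2 = 1) (hne : α * β ≠ 0)
    (K : ℝ) (hK : K = Real.sqrt (1 + 4 * α ^ 2 * β ^ 2))
    (B0 B1 : Matrix (Fin 2) (Fin 2) ℂ)
    (hB0 : B0 = ((K : ℂ))⁻¹ • (sigmaZ + ((2 * α * β : ℝ) : ℂ) • sigmaX))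
    (hB1 : B1 = ((K : ℂ))⁻¹ • (sigmaZ - ((2 * α * β : ℝ) : ℂ) • sigmaX))
    (ψ : Fin 2 × Fin 2 → ℂ)
    (hψ : ψ = (α : ℂ) • tens e0 e0 + (β : ℂ) • tens e1 e1) :
    B0.IsHermitian ∧ B1.IsHermitian ∧ B0 * B0 = 1 ∧ B1 * B1 = 1 ∧
    star ψ ⬝ᵥ ((sigmaZ ⊗ₖ B0 + sigmaZ ⊗ₖ B1 + sigmaX ⊗ₖ B0 - sigmaX ⊗ₖ B1) *ᵥ ψ) =
      ((2 * Real.sqrt (1 + 4 * α ^ 2 * β ^ 2) : ℝ) : ℂ) := by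
  have hpos : (0:ℝ) < 1 + 4 * α ^ 2 * β ^ 2 := by positivity
  have hKpos : 0 < K := by rw [hK]; exact Real.sqrt_pos.mpr hpos
  have hK2 : K ^ 2 = 1 + 4 * α ^ 2 * β ^ 2 := by
    rw [hK, Real.sq_sqrt hpos.le]
  have hKne : (K : ℂ) ≠ 0 := by
    exact_mod_cast Complex.ofReal_ne_zero.mpr hKpos.ne'
  have hK2c : (K : ℂ) ^ 2 = 1 + 4 * (α:ℂ) ^ 2 * (β:ℂ) ^ 2 := by
    exact_mod_cast congrArg (Complex.ofReal) hK2
  have hab : (α:ℂ) ^ 2 + (β:ℂ) ^ 2 = 1 := by exact_mod_cast congrArg Complex.ofReal hαβ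
  refine ⟨?_, ?_, ?_, ?_, ?_⟩
  · rw [hB0]
    ext i j
    fin_cases i <;> fin_cases j <;>
      simp [Matrix.conjTranspose_apply, sigmaZ, sigmaX, map_inv₀, Complex.conj_ofReal]
  · rw [hB1]
    ext i j
    fin_cases i <;> fin_cases j <;>
      simp [Matrix.conjTranspose_apply, sigmaZ, sigmaX, map_inv₀, Complex.conj_ofReal]
  · rw [hB0]
    ext i j
    fin_cases i <;> fin_cases j <;>
      simp [Matrix.mul_apply, Fin.sum_univ_two, sigmaZ, sigmaX, Matrix.one_apply] <;>
      (field_simp <;> ring_nf <;> linear_combination -hK2c)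
  · rw [hB1]
    ext i j
    fin_cases i <;> fin_cases j <;>
      simp [Matrix.mul_apply, Fin.sum_univ_two, sigmaZ, sigmaX, Matrix.one_apply] <;>
      (field_simp <;> ring_nf <;> linear_combination -hK2c)
  · rw [hB0, hB1, hψ, ← hK]
    simp [dotProduct, Matrix.mulVec, Fintype.sum_prod_type, Fin.sum_univ_two,
      kroneckerMap_apply, sigmaZ, sigmaX, tens, e0, e1, Complex.conj_ofReal]
    field_simp
    ring_nf
    linear_combination 2*hab - 2*hK2c
end

section
/- Let α, β be real numbers with α² + β² = 1 and αβ ≠ 0, and let ψ = α·(e₀ ⊗ e₀) + β·(e₁ ⊗ e₁). Then there exist 2×2 complex Hermitian matrices B₀, B₁ with B₀² = B₁² = I such that ⟨ψ, (σz ⊗ B₀ + σz ⊗ B₁ + σx ⊗ B₀ − σx ⊗ B₁) ψ⟩ > 2. In other words, every state of the form α|00⟩ + β|11⟩ with α, β both nonzero violates the CHSH inequality. -/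
open Matrix Kronecker

/-- Every state α|00⟩ + β|11⟩ with α, β real, α² + β² = 1 and αβ ≠ 0 violates the CHSH
inequality: there are ±1-valued qubit observables B₀, B₁ (Hermitian, squaring to the
identity) such that the CHSH expectation ⟨ψ, (σz⊗B₀ + σz⊗B₁ + σx⊗B₀ − σx⊗B₁)ψ⟩ is a real
number strictly greater than 2. -/
theorem every_pure_entangled_violates_chsh (α β : ℝ)
    (hαβ : α ^ 2 + β ^ 2 = 1) (hne : α * β ≠ 0)
    (ψ : Fin 2 × Fin 2 → ℂ)
    (hψ : ψ = (α : ℂ) • tens e0 e0 + (β : ℂ) • tens e1 e1) :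
    ∃ B0 B1 : Matrix (Fin 2) (Fin 2) ℂ,
      B0.IsHermitian ∧ B1.IsHermitian ∧ B0 * B0 = 1 ∧ B1 * B1 = 1 ∧
      ∃ t : ℝ,
        star ψ ⬝ᵥ ((sigmaZ ⊗ₖ B0 + sigmaZ ⊗ₖ B1 + sigmaX ⊗ₖ B0 - sigmaX ⊗ₖ B1) *ᵥ ψ) =
          (t : ℂ) ∧ 2 < t := by
  have hgt : (1:ℝ) < 1 + 4 * (α * β) ^ 2 := by
    nlinarith [sq_nonneg (α * β), sq_pos_of_ne_zero hne]
  set r : ℝ := Real.sqrt (1 + 4 * (α * β) ^ 2) with hr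
  have hrgt : 1 < r := by
    rw [hr]; exact (Real.lt_sqrt (by norm_num)).mpr (by nlinarith)
  have hrpos : 0 < r := lt_trans one_pos hrgt
  have hrsq : r ^ 2 = 1 + 4 * (α * β) ^ 2 := Real.sq_sqrt (by linarith)
  set c : ℝ := 1 / r with hc
  set s : ℝ := 2 * (α * β) / r with hs
  have hcs : c ^ 2 + s ^ 2 = 1 := by
    rw [hc, hs]; field_simp [hrpos.ne']
    nlinarith [hrsq]
  refine ⟨!![(c:ℂ), s; s, -c], !![(c:ℂ), -s; -s, -c], ?_, ?_, ?_, ?_, 2 * r, ?_, by linarith⟩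
  · ext i j; fin_cases i <;> fin_cases j <;>
      simp [Matrix.conjTranspose_apply, Complex.conj_ofReal]
  · ext i j; fin_cases i <;> fin_cases j <;>
      simp [Matrix.conjTranspose_apply, Complex.conj_ofReal]
  · ext i j; fin_cases i <;> fin_cases j <;>
      simp [Matrix.mul_apply, Fin.sum_univ_succ, Matrix.one_apply] <;>
      first | ring1 | (norm_cast; nlinarith [hcs])
  · ext i j; fin_cases i <;> fin_cases j <;>
      simp [Matrix.mul_apply, Fin.sum_univ_succ, Matrix.one_apply] <;>
      first | ring1 | (norm_cast; nlinarith [hcs])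
  · subst hψ
    simp [dotProduct, mulVec, Fintype.sum_prod_type, Fin.sum_univ_succ, tens, e0, e1,
      sigmaZ, sigmaX, Matrix.kroneckerMap_apply, Complex.star_def, Complex.conj_ofReal]
    have key : α * ((c + c) * α + (s + s) * β) + β * ((s + s) * α + (c + c) * β) = 2 * r := by
      rw [hc, hs]; field_simp; nlinarith [hrsq, hαβ]
    convert congrArg Complex.ofReal key using 1
    push_cast; ring
    push_cast; ring
end

section
/- Let (Λ, μ) be a probability space and let a, b : Λ → Fin 2 → ℝ be measurable functions (with a λ x and b λ y integrable in λ for each setting) such that |a λ x| ≤ 1 and |b λ y| ≤ 1 for all λ ∈ Λ and all settings x, y ∈ Fin 2. Then |∫ (a λ 0 · b λ 0 + a λ 0 · b λ 1 + a λ 1 · b λ 0 − a λ 1 · b λ 1) dμ(λ)| ≤ 2. -/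
open MeasureTheory

/-- CHSH inequality for local hidden-variable models: if a probability space (Λ, μ) carries
measurable, integrable local response functions `a λ x`, `b λ y` bounded in [−1, 1], then the
μ-average of the CHSH combination is at most 2 in absolute value. -/
theorem chsh_inequality_local_model
    {Λ : Type*} [MeasurableSpace Λ] (μ : Measure Λ) [IsProbabilityMeasure μ]
    (a b : Λ → Fin 2 → ℝ)
    (hameas : ∀ x : Fin 2, Measurable fun l => a l x)
    (hbmeas : ∀ y : Fin 2, Measurable fun l => b l y)
    (haint : ∀ x : Fin 2, Integrable (fun l => a l x) μ)
    (hbint : ∀ y : Fin 2, Integrable (fun l => b l y) μ)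
    (habd : ∀ l : Λ, ∀ x : Fin 2, |a l x| ≤ 1)
    (hbbd : ∀ l : Λ, ∀ y : Fin 2, |b l y| ≤ 1) :
    |∫ l, (a l 0 * b l 0 + a l 0 * b l 1 + a l 1 * b l 0 - a l 1 * b l 1) ∂μ| ≤ 2 := by
  have hpt : ∀ l, |a l 0 * b l 0 + a l 0 * b l 1 + a l 1 * b l 0 - a l 1 * b l 1| ≤ 2 := by
    intro l
    have ha0 := abs_le.mp (habd l 0)
    have ha1 := abs_le.mp (habd l 1)
    have hb0 := abs_le.mp (hbbd l 0)
    have hb1 := abs_le.mp (hbbd l 1)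
    have key : a l 0 * b l 0 + a l 0 * b l 1 + a l 1 * b l 0 - a l 1 * b l 1
        = a l 0 * (b l 0 + b l 1) + a l 1 * (b l 0 - b l 1) := by ring
    rw [key]
    have h1 : |a l 0 * (b l 0 + b l 1)| ≤ |b l 0 + b l 1| := by
      rw [abs_mul]; exact mul_le_of_le_one_left (abs_nonneg _) (habd l 0)
    have h2 : |a l 1 * (b l 0 - b l 1)| ≤ |b l 0 - b l 1| := by
      rw [abs_mul]; exact mul_le_of_le_one_left (abs_nonneg _) (habd l 1)
    have h3 : |b l 0 + b l 1| + |b l 0 - b l 1| ≤ 2 := by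
      rcases abs_cases (b l 0 + b l 1) with ⟨e1, _⟩ | ⟨e1, _⟩ <;>
        rcases abs_cases (b l 0 - b l 1) with ⟨e2, _⟩ | ⟨e2, _⟩ <;>
          rw [e1, e2] <;> linarith [hb0.1, hb0.2, hb1.1, hb1.2]
    calc |a l 0 * (b l 0 + b l 1) + a l 1 * (b l 0 - b l 1)|
        ≤ |a l 0 * (b l 0 + b l 1)| + |a l 1 * (b l 0 - b l 1)| := abs_add_le _ _
      _ ≤ 2 := by linarith
  have hint : Integrable (fun l => a l 0 * b l 0 + a l 0 * b l 1 + a l 1 * b l 0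
      - a l 1 * b l 1) μ := by
    have hprod : ∀ x y : Fin 2, Integrable (fun l => a l x * b l y) μ := by
      intro x y
      apply Integrable.bdd_mul (c := 1) (hbint y) ((hameas x).aestronglyMeasurable)
      exact Filter.Eventually.of_forall fun l => habd l x
    exact (((hprod 0 0).add (hprod 0 1)).add (hprod 1 0)).sub (hprod 1 1)
  calc |∫ l, (a l 0 * b l 0 + a l 0 * b l 1 + a l 1 * b l 0 - a l 1 * b l 1) ∂μ|
      ≤ ∫ l, |a l 0 * b l 0 + a l 0 * b l 1 + a l 1 * b l 0 - a l 1 * b l 1| ∂μ :=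
        by simpa using norm_integral_le_integral_norm (μ := μ) (fun l => a l 0 * b l 0 + a l 0 * b l 1 + a l 1 * b l 0 - a l 1 * b l 1)
    _ ≤ ∫ _, (2 : ℝ) ∂μ := integral_mono hint.abs (integrable_const 2) hpt
    _ = 2 := by simp
end

section
/- Let (Λ, μ) be a probability space, f : Λ → ℝ integrable, and A, B ⊆ Λ disjoint measurable sets with μ(A) = μ(B) = Ω/2 for some real Ω. Suppose f(λ) ≤ 2 for μ-almost every λ ∈ A ∪ B, f(λ) ≤ 4 for μ-almost every λ ∈ Λ, and ∫ f dμ ≥ 2√2. Then Ω ≤ 2 − √2. -/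
open MeasureTheory

/-- Threshold bound on the degree of epistemicity: if disjoint measurable sets A, B each have
measure Ω/2, f ≤ 2 a.e. on A ∪ B, f ≤ 4 a.e., and ∫ f dμ ≥ 2√2, then Ω ≤ 2 − √2. -/
theorem epistemicity_threshold_bound
    {Λ : Type*} [MeasurableSpace Λ] (μ : Measure Λ) [IsProbabilityMeasure μ]
    (f : Λ → ℝ) (hf : Integrable f μ)
    (A B : Set Λ) (hA : MeasurableSet A) (hB : MeasurableSet B)
    (hdisj : Disjoint A B) (Ω : ℝ)
    (hμA : (μ A).toReal = Ω / 2) (hμB : (μ B).toReal = Ω / 2)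
    (h2 : ∀ᵐ l ∂μ, l ∈ A ∪ B → f l ≤ 2)
    (h4 : ∀ᵐ l ∂μ, f l ≤ 4)
    (hint : 2 * Real.sqrt 2 ≤ ∫ l, f l ∂μ) :
    Ω ≤ 2 - Real.sqrt 2 := by
  set S : Set Λ := A ∪ B with hS
  have hSm : MeasurableSet S := hA.union hB
  have hμS : (μ S).toReal = Ω := by
    rw [hS, measure_union hdisj hB, ENNReal.toReal_add (measure_ne_top μ A) (measure_ne_top μ B),
      hμA, hμB]
    ring
  have hsplit : (∫ l in S, f l ∂μ) + (∫ l in Sᶜ, f l ∂μ) = ∫ l, f l ∂μ :=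
    integral_add_compl hSm hf
  have hIS : (∫ l in S, f l ∂μ) ≤ 2 * (μ S).toReal := by
    have : (∫ l in S, f l ∂μ) ≤ ∫ _ in S, (2 : ℝ) ∂μ := by
      apply integral_mono_ae hf.integrableOn ((integrableOn_const_iff (C := (2 : ℝ))).mpr (Or.inr (measure_lt_top μ S)))
      exact (ae_restrict_iff' hSm).mpr h2
    simpa [Measure.restrict_apply_univ, mul_comm, Measure.real] using this
  have hISc : (∫ l in Sᶜ, f l ∂μ) ≤ 4 * (μ Sᶜ).toReal := by
    have : (∫ l in Sᶜ, f l ∂μ) ≤ ∫ _ in Sᶜ, (4 : ℝ) ∂μ := by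
      apply integral_mono_ae hf.integrableOn
        ((integrableOn_const_iff (C := (4 : ℝ))).mpr (Or.inr (measure_lt_top μ Sᶜ)))
      exact ae_restrict_of_ae h4
    simpa [mul_comm, Measure.real] using this
  have hμSc : (μ Sᶜ).toReal = 1 - (μ S).toReal := by
    have h1 : μ Sᶜ = 1 - μ S := by
      rw [measure_compl hSm (measure_ne_top μ S), measure_univ]
    rw [h1, ENNReal.toReal_sub_of_le (prob_le_one) (by simp)]
    simp
  have hμSΩ : Ω ≤ 1 := by
    rw [← hμS]; exact ENNReal.toReal_le_of_le_ofReal zero_le_one (by simpa using prob_le_one)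
  have key : 2 * Real.sqrt 2 ≤ 4 - 2 * Ω := by
    calc 2 * Real.sqrt 2 ≤ ∫ l, f l ∂μ := hint
      _ = (∫ l in S, f l ∂μ) + (∫ l in Sᶜ, f l ∂μ) := hsplit.symm
      _ ≤ 2 * (μ S).toReal + 4 * (μ Sᶜ).toReal := add_le_add hIS hISc
      _ = 4 - 2 * Ω := by rw [hμSc, hμS]; ring
  linarith
end

section
/- Let (Λ, μ) be a probability space, f : Λ → ℝ integrable, t a real number with 0 < t < 1, and A, B ⊆ Λ disjoint measurable sets with μ(A) = t·Ω₁ and μ(B) = (1 − t)·Ω₂ for some reals Ω₁, Ω₂. Suppose f(λ) ≤ 2 for μ-almost every λ ∈ A ∪ B, f(λ) ≤ 4 for μ-almost every λ ∈ Λ, and ∫ f dμ ≥ 2√(1 + 4t(1 − t)). Then t·Ω₁ + (1 − t)·Ω₂ ≤ 2 − √(1 + 4t(1 − t)). -/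
open MeasureTheory

/-- General bound on the degree of epistemicity: with t = |α|² ∈ (0,1), if disjoint measurable
sets A, B have measures t·Ω₁ and (1−t)·Ω₂, f ≤ 2 a.e. on A ∪ B, f ≤ 4 a.e., and
∫ f dμ ≥ 2√(1 + 4t(1−t)), then t·Ω₁ + (1−t)·Ω₂ ≤ 2 − √(1 + 4t(1−t)). -/
theorem epistemicity_general_bound
    {Λ : Type*} [MeasurableSpace Λ] (μ : Measure Λ) [IsProbabilityMeasure μ]
    (f : Λ → ℝ) (hf : Integrable f μ)
    (t : ℝ) (ht0 : 0 < t) (ht1 : t < 1)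
    (A B : Set Λ) (hA : MeasurableSet A) (hB : MeasurableSet B)
    (hdisj : Disjoint A B) (Ω₁ Ω₂ : ℝ)
    (hμA : (μ A).toReal = t * Ω₁) (hμB : (μ B).toReal = (1 - t) * Ω₂)
    (h2 : ∀ᵐ l ∂μ, l ∈ A ∪ B → f l ≤ 2)
    (h4 : ∀ᵐ l ∂μ, f l ≤ 4)
    (hint : 2 * Real.sqrt (1 + 4 * t * (1 - t)) ≤ ∫ l, f l ∂μ) :
    t * Ω₁ + (1 - t) * Ω₂ ≤ 2 - Real.sqrt (1 + 4 * t * (1 - t)) := by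
  set S := A ∪ B with hSdef
  have hS : MeasurableSet S := hA.union hB
  have hsplit : ∫ l, f l ∂μ = (∫ l in S, f l ∂μ) + ∫ l in Sᶜ, f l ∂μ :=
    (integral_add_compl hS hf).symm
  have hmS : (μ S).toReal = t * Ω₁ + (1 - t) * Ω₂ := by
    rw [hSdef, measure_union hdisj hB, ENNReal.toReal_add (measure_ne_top μ A)
      (measure_ne_top μ B), hμA, hμB]
  have hmS1 : (μ S).toReal ≤ 1 := by
    have := prob_le_one (μ := μ) (s := S)
    simpa using ENNReal.toReal_mono ENNReal.one_ne_top this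
  have hb1 : ∫ l in S, f l ∂μ ≤ 2 * (μ S).toReal := by
    have : ∫ l in S, f l ∂μ ≤ ∫ _ in S, (2 : ℝ) ∂μ := by
      refine setIntegral_mono_ae_restrict hf.integrableOn (integrableOn_const ?_) ?_
      · exact measure_ne_top μ S
      · filter_upwards [ae_restrict_of_ae h2, ae_restrict_mem hS] with l h hl
        exact h hl
    simpa [mul_comm, Measure.real] using this
  have hb2 : ∫ l in Sᶜ, f l ∂μ ≤ 4 * (μ Sᶜ).toReal := by
    have : ∫ l in Sᶜ, f l ∂μ ≤ ∫ _ in Sᶜ, (4 : ℝ) ∂μ := by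
      refine setIntegral_mono_ae_restrict hf.integrableOn (integrableOn_const ?_) ?_
      · exact measure_ne_top μ Sᶜ
      · exact ae_restrict_of_ae h4
    simpa [mul_comm, Measure.real] using this
  have hcompl : (μ Sᶜ).toReal = 1 - (μ S).toReal := by
    have h := measure_compl hS (measure_ne_top μ S)
    rw [h, measure_univ, ENNReal.toReal_sub_of_le (prob_le_one) ENNReal.one_ne_top]
    simp
  have key : 2 * Real.sqrt (1 + 4 * t * (1 - t)) ≤ 4 - 2 * (μ S).toReal := by
    calc 2 * Real.sqrt (1 + 4 * t * (1 - t)) ≤ ∫ l, f l ∂μ := hint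
      _ ≤ 2 * (μ S).toReal + 4 * (μ Sᶜ).toReal := by rw [hsplit]; linarith
      _ = 4 - 2 * (μ S).toReal := by rw [hcompl]; ring
  rw [← hmS]; linarith
end
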